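/- Let R be a (left) nearfield which is not distributive, i.e. there exist α, β, λ ∈ R with (α+β)·λ ≠ α·λ + β·λ, and let n be a positive integer. For any v ∈ R^n, span({v}) = { x ∈ R^n : x_j = 0 for every coordinate j with v_j = 0 }. In particular, span({v}) is the direct sum of the coordinate lines e_j·R over the coordinates j where v_j ≠ 0, so span({v}) is k-dimensional if and only if v has exactly k nonzero entries. -/
import Mathlib


/-- A (left) nearfield: `(R,+)` is an abelian group, multiplication is associative
with identity `1 ≠ 0`, every nonzero element has a two-sided inverse,
`0` multiplies to `0` on both sides, and the left distributive law holds. -/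
class Nearfield (R : Type*) extends AddCommGroup R, One R, Mul R where
  mul_assoc : ∀ a b c : R, a * b * c = a * (b * c)
  one_mul : ∀ a : R, 1 * a = a
  mul_one : ∀ a : R, a * 1 = a
  one_ne_zero : (1 : R) ≠ 0
  zero_mul : ∀ a : R, 0 * a = 0
  mul_zero : ∀ a : R, a * 0 = 0
  left_distrib : ∀ a b c : R, a * (b + c) = a * b + a * c
  exists_inv : ∀ a : R, a ≠ 0 → ∃ b : R, a * b = 1 ∧ b * a = 1

variable {R : Type*} [Nearfield R] {n : ℕ}

/-- Right scalar multiplication on `R^n`: `(x · r) j = x j * r`. -/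
def vsmul (x : Fin n → R) (r : R) : Fin n → R := fun j => x j * r

/-- An `R`-subgroup of `R^n`: an additive subgroup closed under right scalar
multiplication. -/
def IsRSubgroup (S : Set (Fin n → R)) : Prop :=
  (0 : Fin n → R) ∈ S ∧ (∀ x ∈ S, ∀ y ∈ S, x + y ∈ S) ∧ (∀ x ∈ S, -x ∈ S) ∧
    ∀ x ∈ S, ∀ r : R, vsmul x r ∈ S

/-- `nvGen V` is the smallest `R`-subgroup of `R^n` containing `V`
(the intersection of all `R`-subgroups containing `V`). -/
def nvGen (V : Set (Fin n → R)) : Set (Fin n → R) :=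
  { x | ∀ S : Set (Fin n → R), IsRSubgroup S → V ⊆ S → x ∈ S }

/-- A subspace of `R^n`: an additive subgroup `N` with `(x+y)·r − x·r ∈ N`
for all `x ∈ R^n`, `y ∈ N`, `r ∈ R`. -/
def IsSubspace (N : Set (Fin n → R)) : Prop :=
  (0 : Fin n → R) ∈ N ∧ (∀ x ∈ N, ∀ y ∈ N, x + y ∈ N) ∧ (∀ x ∈ N, -x ∈ N) ∧
    ∀ x : Fin n → R, ∀ y ∈ N, ∀ r : R, vsmul (x + y) r - vsmul x r ∈ N

/-- `nvSpan V` is the smallest subspace of `R^n` containing `V`. -/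
def nvSpan (V : Set (Fin n → R)) : Set (Fin n → R) :=
  { x | ∀ N : Set (Fin n → R), IsSubspace N → V ⊆ N → x ∈ N }

/-- `nvLC V 0 = V` and `nvLC V (m+1)` is the set of all finite right `R`-linear
combinations of elements of `nvLC V m`. -/
def nvLC (V : Set (Fin n → R)) : ℕ → Set (Fin n → R)
  | 0 => V
  | m + 1 => { x | ∃ F : Finset (Fin n → R), ↑F ⊆ nvLC V m ∧
      ∃ lam : (Fin n → R) → R, x = ∑ w ∈ F, vsmul w (lam w) }


section Aux

lemma nf_mul_neg (a b : R) : a * (-b) = -(a * b) := by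
  have h : a * b + a * (-b) = 0 := by
    rw [← Nearfield.left_distrib, add_neg_cancel, Nearfield.mul_zero]
  exact (neg_eq_of_add_eq_zero_right h).symm

lemma nf_mul_sub (a b c : R) : a * (b - c) = a * b - a * c := by
  rw [sub_eq_add_neg, Nearfield.left_distrib, nf_mul_neg, ← sub_eq_add_neg]

/-- Non-distributivity yields a witness with second summand `1`. -/
lemma nf_unit_witness
    (hd : ∃ α β lam : R, (α + β) * lam ≠ α * lam + β * lam) :
    ∃ a l : R, (a + 1) * l ≠ a * l + l := by
  by_contra h
  push_neg at h
  obtain ⟨α, β, lam, hne⟩ := hd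
  apply hne
  rcases eq_or_ne β 0 with hb | hb
  · subst hb; rw [add_zero, Nearfield.zero_mul, add_zero]
  · obtain ⟨b, hb1, hb2⟩ := Nearfield.exists_inv β hb
    have key : α + β = β * (b * α + 1) := by
      rw [Nearfield.left_distrib, Nearfield.mul_one, ← Nearfield.mul_assoc, hb1,
        Nearfield.one_mul, add_comm]
    rw [key, Nearfield.mul_assoc, h (b * α) lam, Nearfield.left_distrib,
      ← Nearfield.mul_assoc, ← Nearfield.mul_assoc, hb1, Nearfield.one_mul]

lemma nf_vsmul_zero (r : R) : vsmul (0 : Fin n → R) r = 0 := by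
  funext i; simp [vsmul, Nearfield.zero_mul]

lemma nf_smul_mem {N : Set (Fin n → R)} (hN : IsSubspace N)
    {y : Fin n → R} (hy : y ∈ N) (r : R) : vsmul y r ∈ N := by
  have h := hN.2.2.2 0 y hy r
  rwa [zero_add, nf_vsmul_zero, sub_zero] at h

lemma nf_sub_mem {N : Set (Fin n → R)} (hN : IsSubspace N)
    {x y : Fin n → R} (hx : x ∈ N) (hy : y ∈ N) : x - y ∈ N := by
  rw [sub_eq_add_neg]
  exact hN.2.1 x hx _ (hN.2.2.1 y hy)

/-- Splitting lemma: a member of a subspace can be restricted to one coordinate. -/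
lemma nf_restrict_mem
    (hd : ∃ α β lam : R, (α + β) * lam ≠ α * lam + β * lam)
    {N : Set (Fin n → R)} (hN : IsSubspace N)
    {w : Fin n → R} (hw : w ∈ N) (j : Fin n) :
    (fun i => if i = j then w i else 0) ∈ N := by
  classical
  obtain ⟨a, l, hal⟩ := nf_unit_witness hd
  set c : R := (a + 1) * l - a * l - l with hc
  have hc0 : c ≠ 0 := fun h => hal (by rwa [hc, sub_sub, sub_eq_zero] at h)
  obtain ⟨c', hc1, hc2⟩ := Nearfield.exists_inv c hc0
  set x : Fin n → R := fun i => if i = j then w i * a else 0 with hx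
  have hE : vsmul (x + w) l - vsmul x l - vsmul w l ∈ N :=
    nf_sub_mem hN (hN.2.2.2 x w hw l) (nf_smul_mem hN hw l)
  have hF : vsmul (vsmul (x + w) l - vsmul x l - vsmul w l) c' ∈ N :=
    nf_smul_mem hN hE c'
  have heq : vsmul (vsmul (x + w) l - vsmul x l - vsmul w l) c'
      = fun i => if i = j then w i else 0 := by
    funext i
    simp only [vsmul, Pi.sub_apply, Pi.add_apply, hx]
    by_cases h : i = j
    · simp only [h, eq_self_iff_true, if_true]
      have h1 : w j * a + w j = w j * (a + 1) := by
        rw [Nearfield.left_distrib, Nearfield.mul_one]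
      rw [h1, Nearfield.mul_assoc, Nearfield.mul_assoc, ← nf_mul_sub, ← nf_mul_sub,
        ← hc, Nearfield.mul_assoc, hc1, Nearfield.mul_one]
    · simp only [if_neg h]
      rw [zero_add, Nearfield.zero_mul, sub_zero, sub_self, Nearfield.zero_mul]
  rwa [heq] at hF

/-- Coordinate lines through the support lie in any subspace containing `w`. -/
lemma nf_line_mem
    (hd : ∃ α β lam : R, (α + β) * lam ≠ α * lam + β * lam)
    {N : Set (Fin n → R)} (hN : IsSubspace N)
    {w : Fin n → R} (hw : w ∈ N) {j : Fin n} (hj : w j ≠ 0) (r : R) :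
    (fun i => if i = j then r else 0) ∈ N := by
  obtain ⟨b, hb1, hb2⟩ := Nearfield.exists_inv (w j) hj
  have h1 := nf_smul_mem hN (nf_restrict_mem hd hN hw j) (b * r)
  have heq : vsmul (fun i => if i = j then w i else 0) (b * r)
      = fun i => if i = j then r else 0 := by
    funext i
    by_cases h : i = j
    · simp only [vsmul, h, eq_self_iff_true, if_true]
      rw [← Nearfield.mul_assoc, hb1, Nearfield.one_mul]
    · simp only [vsmul, if_neg h, Nearfield.zero_mul]
  rwa [heq] at h1

lemma nf_sum_mem {N : Set (Fin n → R)} (hN : IsSubspace N)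
    (f : Fin n → Fin n → R) (hf : ∀ j, f j ∈ N) : ∑ j, f j ∈ N := by
  classical
  exact Finset.sum_induction f (· ∈ N) (fun a b ha hb => hN.2.1 a ha b hb) hN.1
    (fun j _ => hf j)

lemma nf_basis_smul (j : Fin n) (r : R) :
    vsmul (fun i => if i = j then (1 : R) else 0) r
      = fun i => if i = j then r else 0 := by
  funext i
  by_cases h : i = j
  · simp only [vsmul, h, eq_self_iff_true, if_true, Nearfield.one_mul]
  · simp only [vsmul, if_neg h, Nearfield.zero_mul]

lemma nf_sum_basis (r : Fin n → R) :
    ∑ j, vsmul (fun i => if i = j then (1 : R) else 0) (r j) = r := by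
  funext i
  have h : (∑ j, vsmul (fun i => if i = j then (1 : R) else 0) (r j)) i
      = ∑ j, (if i = j then r j else 0) := by
    rw [Finset.sum_apply]
    exact Finset.sum_congr rfl fun j _ => by rw [nf_basis_smul]
  rw [h, Finset.sum_ite_eq]
  simp

end Aux

/-- in a non-distributive nearfield, `span({v})` consists exactly
of the vectors supported on the support of `v`; moreover every element of
`span({v})` is a unique right linear combination of the coordinate vectors `e_j`
with `v_j ≠ 0` (so `span({v})` is the direct sum of the lines `e_j·R` over the
support of `v`, and its dimension is the number of nonzero entries of `v`). -/
theorem span_singleton_support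
    (hd : ∃ α β lam : R, (α + β) * lam ≠ α * lam + β * lam)
    (hn : 0 < n) (v : Fin n → R) :
    nvSpan {v} = { x : Fin n → R | ∀ j, v j = 0 → x j = 0 } ∧
    ∀ x ∈ nvSpan {v}, ∃! r : Fin n → R,
      (∀ j, v j = 0 → r j = 0) ∧
      x = ∑ j, vsmul (fun i => if i = j then (1 : R) else 0) (r j) := by
  classical
  have hsub : IsSubspace { x : Fin n → R | ∀ j, v j = 0 → x j = 0 } := by
    refine ⟨fun j _ => rfl, ?_, ?_, ?_⟩
    · intro x hx y hy j hj
      simp only [Pi.add_apply, hx j hj, hy j hj, add_zero]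
    · intro x hx j hj
      simp only [Pi.neg_apply, hx j hj, neg_zero]
    · intro x y hy r j hj
      simp only [Pi.sub_apply, Pi.add_apply, vsmul, hy j hj, add_zero, sub_self]
  have hspan : nvSpan {v} = { x : Fin n → R | ∀ j, v j = 0 → x j = 0 } := by
    apply Set.Subset.antisymm
    · intro x hx
      exact hx _ hsub (fun y hy => by
        rw [Set.mem_singleton_iff] at hy; subst hy; exact fun j hj => hj)
    · intro x hx N hN hvN
      have hv : v ∈ N := hvN rfl
      have hxsum : (∑ j, fun i => if i = j then x j else 0) = x :=
        calc (∑ j, fun i => if i = j then x j else 0)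
            = ∑ j, vsmul (fun i => if i = j then (1 : R) else 0) (x j) :=
              Finset.sum_congr rfl fun j _ => (nf_basis_smul j (x j)).symm
          _ = x := nf_sum_basis x
      rw [← hxsum]
      refine nf_sum_mem hN _ fun j => ?_
      by_cases h : v j = 0
      · have hz : (fun i => if i = j then x j else 0) = (0 : Fin n → R) := by
          funext i; rw [hx j h]; simp
        rw [hz]; exact hN.1
      · exact nf_line_mem hd hN hv h (x j)
  refine ⟨hspan, fun x hx => ?_⟩
  rw [hspan] at hx
  refine ⟨x, ⟨hx, (nf_sum_basis x).symm⟩, ?_⟩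
  rintro r ⟨hr1, hr2⟩
  rw [nf_sum_basis r] at hr2
  exact hr2.symm
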